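/- Let φ : ℕ → ℝ≥0 with φ(0) = 0, φ(1) = 1, nondecreasing and concave, and suppose the increments w_i = φ(i) - φ(i-1) are geometrically dominant: w_i / w_{i+1} ≥ w_{i+1} / w_{i+2} for all i ≥ 1 (with all w_i > 0). Then for all integers k ≥ 1, E[φ(Poi(k))]/φ(k) ≥ E[φ(Poi(1))]/φ(1), i.e. α_φ = α_φ(1). -/

import Mathlib

open scoped ENNReal
open ENNReal

namespace Stmt14Aux

variable (φ : ℕ → ℝ)

noncomputable def pp (l : ℝ) (j : ℕ) : ℝ≥0∞ :=
  ENNReal.ofReal (Real.exp (-l) * l ^ j / (Nat.factorial j))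

noncomputable def G (l : ℝ) : ℝ≥0∞ := ∑' j, pp l j * ENNReal.ofReal (φ j)

noncomputable def W (a : ℕ) : ℝ := φ (a + 1) - φ a

section
variable (hφnn : ∀ k, 0 ≤ φ k) (hφ0 : φ 0 = 0) (hφ1 : φ 1 = 1)
  (hφmono : Monotone φ)
  (hφconc : ∀ k, φ (k + 2) - φ (k + 1) ≤ φ (k + 1) - φ k)
  (hpos : ∀ i : ℕ, 0 < φ (i + 1) - φ i)
  (hgeo : ∀ i : ℕ, (φ (i + 2) - φ (i + 1)) ^ 2 ≤
      (φ (i + 1) - φ i) * (φ (i + 3) - φ (i + 2)))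

lemma pp_real_nonneg (l : ℝ) (hl : 0 ≤ l) (j : ℕ) :
    0 ≤ Real.exp (-l) * l ^ j / (Nat.factorial j) := by positivity

lemma pp_real_hasSum (l : ℝ) : HasSum (fun j : ℕ => Real.exp (-l) * l ^ j / (Nat.factorial j)) 1 := by
  apply (hasSum_mul_left_iff (Real.exp_ne_zero l)).mp
  simp only [mul_one]
  have h : (fun j : ℕ => Real.exp l * (Real.exp (-l) * l ^ j / (Nat.factorial j))) =
      fun j : ℕ => l ^ j / (Nat.factorial j) := by
    ext n
    rw [mul_div_assoc, Real.exp_neg, ← mul_assoc, ← div_eq_mul_inv,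
      div_self (Real.exp_ne_zero l), one_mul]
  rw [h, Real.exp_eq_exp_ℝ]
  exact NormedSpace.expSeries_div_hasSum_exp l

lemma pp_real_summable (l : ℝ) : Summable (fun j : ℕ => Real.exp (-l) * l ^ j / (Nat.factorial j)) :=
  (pp_real_hasSum l).summable

lemma pp_tsum (l : ℝ) (hl : 0 ≤ l) : ∑' j, pp l j = 1 := by
  unfold pp
  rw [← ENNReal.ofReal_tsum_of_nonneg (pp_real_nonneg l hl) (pp_real_summable l),
    (pp_real_hasSum l).tsum_eq, ENNReal.ofReal_one]

lemma pp_mean (l : ℝ) (hl : 0 ≤ l) :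
    ∑' j, pp l j * ENNReal.ofReal (j : ℝ) = ENNReal.ofReal l := by
  rw [tsum_eq_zero_add' (f := fun j : ℕ => pp l j * ENNReal.ofReal (j : ℝ)) ENNReal.summable]
  simp only [Nat.cast_zero, ENNReal.ofReal_zero, mul_zero, zero_add]
  have h : ∀ j : ℕ, pp l (j + 1) * ENNReal.ofReal ((j + 1 : ℕ) : ℝ)
      = ENNReal.ofReal l * pp l j := by
    intro j
    unfold pp
    rw [← ENNReal.ofReal_mul (pp_real_nonneg l hl (j+1)), ← ENNReal.ofReal_mul hl]
    congr 1
    have hfac : ((Nat.factorial (j+1)) : ℝ) = (j+1) * (Nat.factorial j) := by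
      rw [Nat.factorial_succ]; push_cast; ring
    have hj : ((j : ℝ) + 1) ≠ 0 := by positivity
    have hjf : ((Nat.factorial j) : ℝ) ≠ 0 := by positivity
    field_simp [hfac]
    rw [hfac]; push_cast; ring
  simp only [h]
  rw [ENNReal.tsum_mul_left, pp_tsum l hl, mul_one]

lemma conv_real (μ ν : ℝ) (j : ℕ) :
    Real.exp (-(μ + ν)) * (μ + ν) ^ j / (Nat.factorial j) =
      ∑ x ∈ Finset.HasAntidiagonal.antidiagonal j,
        (Real.exp (-μ) * μ ^ x.1 / (Nat.factorial x.1)) * (Real.exp (-ν) * ν ^ x.2 / (Nat.factorial x.2)) := by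
  rw [Finset.Nat.sum_antidiagonal_eq_sum_range_succ_mk]
  rw [add_pow]
  rw [neg_add, Real.exp_add]
  rw [Finset.mul_sum, Finset.sum_div]
  refine Finset.sum_congr rfl fun m hm => ?_
  rw [Finset.mem_range, Nat.lt_succ_iff] at hm
  have hfact : ((j.choose m : ℝ)) * (Nat.factorial m) * (Nat.factorial (j - m)) = ((Nat.factorial j) : ℝ) := by
    exact_mod_cast Nat.choose_mul_factorial_mul_factorial hm
  have h1 : ((Nat.factorial m) : ℝ) ≠ 0 := by positivity
  have h2 : ((Nat.factorial (j - m)) : ℝ) ≠ 0 := by positivity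
  have h3 : ((Nat.factorial j) : ℝ) ≠ 0 := by positivity
  have hc : ((j.choose m : ℕ) : ℝ) ≠ 0 := by
    exact Nat.cast_ne_zero.mpr (Nat.choose_pos hm).ne'
  rw [← hfact]
  field_simp

lemma conv_enn (μ ν : ℝ) (hμ : 0 ≤ μ) (hν : 0 ≤ ν) (j : ℕ) :
    pp (μ + ν) j = ∑ x ∈ Finset.HasAntidiagonal.antidiagonal j, pp μ x.1 * pp ν x.2 := by
  unfold pp
  rw [conv_real μ ν j, ENNReal.ofReal_sum_of_nonneg]
  · refine Finset.sum_congr rfl fun x _ => ?_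
    rw [ENNReal.ofReal_mul (pp_real_nonneg μ hμ x.1)]
  · intro x _
    have := pp_real_nonneg μ hμ x.1
    have := pp_real_nonneg ν hν x.2
    positivity

lemma conv_tsum (μ ν : ℝ) (hμ : 0 ≤ μ) (hν : 0 ≤ ν) (f : ℕ → ℝ≥0∞) :
    ∑' j, pp (μ + ν) j * f j =
      ∑' x : ℕ × ℕ, pp μ x.1 * pp ν x.2 * f (x.1 + x.2) := by
  have step1 : ∀ j : ℕ, pp (μ + ν) j * f j =
      ∑ x ∈ Finset.HasAntidiagonal.antidiagonal j, pp μ x.1 * pp ν x.2 * f (x.1 + x.2) := by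
    intro j
    rw [conv_enn μ ν hμ hν j, Finset.sum_mul]
    refine Finset.sum_congr rfl fun x hx => ?_
    rw [Finset.HasAntidiagonal.mem_antidiagonal] at hx
    rw [hx]
  set g : ℕ × ℕ → ℝ≥0∞ := fun x => pp μ x.1 * pp ν x.2 * f (x.1 + x.2) with hg
  calc ∑' j, pp (μ + ν) j * f j
      = ∑' (j : ℕ) (x : {x // x ∈ Finset.HasAntidiagonal.antidiagonal j}), g (x : ℕ × ℕ) := by
        refine tsum_congr fun j => ?_
        rw [step1 j, ← Finset.tsum_subtype]
    _ = ∑' (p : Σ n : ℕ, {x // x ∈ Finset.HasAntidiagonal.antidiagonal n}), g (p.2 : ℕ × ℕ) :=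
        (ENNReal.tsum_sigma' (fun p : (Σ n : ℕ, {x // x ∈ Finset.HasAntidiagonal.antidiagonal n}) => g (p.2 : ℕ × ℕ))).symm
    _ = ∑' x : ℕ × ℕ, g x := Finset.HasAntidiagonal.sigmaAntidiagonalEquivProd.tsum_eq g


include hpos

lemma Wpos : ∀ a, 0 < W φ a := hpos

include hφ0 hφ1 in
lemma W0 : W φ 0 = 1 := by simp [W, hφ0, hφ1]

include hgeo in
lemma ratio_mono : ∀ i j, i ≤ j → W φ (i+1) * W φ j ≤ W φ i * W φ (j+1) := by
  intro i j hij
  induction j, hij using Nat.le_induction with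
  | base => exact le_of_eq (mul_comm _ _)
  | succ j hij ih =>
    have h1 : W φ (j+1) ^ 2 ≤ W φ j * W φ (j+2) := by
      have := hgeo j
      simpa [W, show j+1+1 = j+2 from rfl, show j+2+1 = j+3 from rfl] using this
    have hj := Wpos φ hpos j
    have hj1 := Wpos φ hpos (j+1)
    have hi1 := Wpos φ hpos (i+1)
    nlinarith [Wpos φ hpos i, Wpos φ hpos (j+2)]

include hφ0 hφ1 hgeo in
lemma W_mul_le : ∀ b a, W φ a * W φ b ≤ W φ (a + b) := by
  intro b
  induction b with
  | zero => intro a; simp [W0 φ hφ0 hφ1 hpos]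
  | succ b ih =>
    intro a
    have hr := ratio_mono φ hpos hgeo b (a + b) (Nat.le_add_left b a)
    have hb := Wpos φ hpos b
    have h2 : W φ b * (W φ a * W φ (b+1)) ≤ W φ b * W φ (a + (b+1)) := by
      calc W φ b * (W φ a * W φ (b+1)) = W φ (b+1) * (W φ a * W φ b) := by ring
      _ ≤ W φ (b+1) * W φ (a+b) := by
          have := ih a
          nlinarith [Wpos φ hpos (b+1)]
      _ ≤ W φ b * W φ (a + (b+1)) := by
          have : a + b + 1 = a + (b+1) := by ring
          rw [← this]; linarith [hr]
    exact le_of_mul_le_mul_left h2 hb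

include hφ0 hφ1 hgeo in
lemma superadd : ∀ b a, φ a + W φ a * φ b ≤ φ (a + b) := by
  intro b
  induction b with
  | zero => intro a; simp [hφ0]
  | succ b ih =>
    intro a
    have key := W_mul_le φ hφ0 hφ1 hpos hgeo b a
    have ha := Wpos φ hpos a
    have : φ (a + (b+1)) = φ (a+b) + W φ (a+b) := by
      simp [W, show a + b + 1 = a + (b+1) from rfl]
    rw [this]
    have hφb1 : φ (b+1) = φ b + W φ b := by simp [W]
    rw [hφb1]
    nlinarith [ih a]

include hφconc in
lemma Wanti : ∀ a, W φ (a+1) ≤ W φ a := by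
  intro a
  have := hφconc a
  simp only [W]
  have e2 : a + 1 + 1 = a + 2 := rfl
  rw [e2]; linarith

include hpos hgeo in
lemma Wconv : ∀ a, 2 * W φ (a+1) ≤ W φ a + W φ (a+2) := by
  intro a
  have h1 : W φ (a+1) ^ 2 ≤ W φ a * W φ (a+2) := by
    have := hgeo a
    simpa [W, show a+1+1 = a+2 from rfl, show a+2+1 = a+3 from rfl] using this
  have pa : (0:ℝ) < W φ a := hpos a
  have pa1 : (0:ℝ) < W φ (a+1) := hpos (a+1)
  have pa2 : (0:ℝ) < W φ (a+2) := hpos (a+2)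
  have hs : (0:ℝ) < 2 * W φ (a+1) + W φ a + W φ (a+2) := by linarith
  nlinarith [h1, sq_nonneg (W φ a - W φ (a+2)), hs]

include hpos hgeo in
/-- D is antitone -/
lemma Danti : ∀ a b, a ≤ b → W φ b - W φ (b+1) ≤ W φ a - W φ (a+1) := by
  intro a b hab
  induction b, hab using Nat.le_induction with
  | base => exact le_refl _
  | succ b hab ih =>
    have := Wconv φ hpos hgeo b
    have e : b + 1 + 1 = b + 2 := rfl
    rw [e]; linarith

include hpos hgeo in
lemma supp_line : ∀ (μ a : ℕ),
    W φ μ + (W φ μ - W φ (μ+1)) * μ ≤ W φ a + (W φ μ - W φ (μ+1)) * a := by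
  intro μ a
  set d : ℝ := W φ μ - W φ (μ+1) with hd
  rcases le_total μ a with h | h
  · induction a, h using Nat.le_induction with
    | base => exact le_refl _
    | succ a hμa ih =>
      have hD : W φ a - W φ (a+1) ≤ d := Danti φ hpos hgeo μ a hμa
      push_cast
      push_cast at ih
      nlinarith
  · -- a ≤ μ : show for all b with a ≤ b ≤ μ
    have key : ∀ b, a ≤ b → b ≤ μ →
        W φ b + d * b ≤ W φ a + d * a := by
      intro b hab
      induction b, hab using Nat.le_induction with
      | base => intro _; exact le_refl _
      | succ b hab ih =>
        intro hbμ
        have hb : b ≤ μ := le_trans (Nat.le_succ b) hbμ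
        have hD : d ≤ W φ b - W φ (b+1) := Danti φ hpos hgeo b μ hb
        have := ih (le_trans (Nat.le_succ b) hbμ)
        push_cast
        push_cast at this
        nlinarith
    exact key μ h (le_refl μ)

include hφconc in
lemma phi_le (hφ0 : φ 0 = 0) (hφ1 : φ 1 = 1) : ∀ j : ℕ, φ j ≤ j := by
  have hW : ∀ a, W φ a ≤ 1 := by
    intro a
    induction a with
    | zero => simp [W, hφ0, hφ1]
    | succ a ih => exact le_trans (Wanti φ hφconc hpos a) ih
  intro j
  induction j with
  | zero => simp [hφ0]
  | succ j ih =>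
    have : φ (j+1) = φ j + W φ j := by simp [W]
    rw [this]; push_cast; linarith [hW j]

omit hpos


include hφconc hpos hgeo in
lemma jensen (μ : ℕ) :
    ENNReal.ofReal (W φ μ) + ENNReal.ofReal ((W φ μ - W φ (μ+1)) * μ) ≤
      (∑' a, pp μ a * ENNReal.ofReal (W φ a)) +
        ENNReal.ofReal ((W φ μ - W φ (μ+1)) * μ) := by
  set d : ℝ := W φ μ - W φ (μ+1) with hd
  have hdnn : 0 ≤ d := sub_nonneg.mpr (Wanti φ hφconc hpos μ)
  have hWnn : ∀ a, 0 ≤ W φ a := fun a => le_of_lt (hpos a)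
  have hμnn : (0:ℝ) ≤ (μ:ℝ) := Nat.cast_nonneg μ
  calc ENNReal.ofReal (W φ μ) + ENNReal.ofReal (d * μ)
      = ENNReal.ofReal (W φ μ + d * μ) := by
        rw [ENNReal.ofReal_add (hWnn μ) (mul_nonneg hdnn hμnn)]
    _ = ENNReal.ofReal (W φ μ + d * μ) * ∑' a, pp (μ:ℝ) a := by
        rw [pp_tsum (μ:ℝ) hμnn, mul_one]
    _ = ∑' a, ENNReal.ofReal (W φ μ + d * μ) * pp (μ:ℝ) a := by
        rw [ENNReal.tsum_mul_left]
    _ ≤ ∑' a, pp (μ:ℝ) a * ENNReal.ofReal (W φ a + d * a) := by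
        refine ENNReal.tsum_le_tsum fun a => ?_
        rw [mul_comm]
        exact mul_le_mul_right (ENNReal.ofReal_le_ofReal
          (supp_line φ hpos hgeo μ a)) _
    _ = ∑' a, (pp (μ:ℝ) a * ENNReal.ofReal (W φ a) +
          ENNReal.ofReal d * (pp (μ:ℝ) a * ENNReal.ofReal (a:ℝ))) := by
        refine tsum_congr fun a => ?_
        rw [ENNReal.ofReal_add (hWnn a) (mul_nonneg hdnn (Nat.cast_nonneg a)),
          ENNReal.ofReal_mul hdnn, mul_add]
        ring
    _ = (∑' a, pp (μ:ℝ) a * ENNReal.ofReal (W φ a)) +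
          ENNReal.ofReal d * ∑' a, pp (μ:ℝ) a * ENNReal.ofReal (a:ℝ) := by
        rw [ENNReal.tsum_add, ENNReal.tsum_mul_left]
    _ = (∑' a, pp (μ:ℝ) a * ENNReal.ofReal (W φ a)) + ENNReal.ofReal (d * μ) := by
        rw [pp_mean (μ:ℝ) hμnn, ← ENNReal.ofReal_mul hdnn]

include hφconc hpos hgeo in
lemma jensen' (μ : ℕ) :
    ENNReal.ofReal (W φ μ) ≤ ∑' a, pp μ a * ENNReal.ofReal (W φ a) :=
  (ENNReal.add_le_add_iff_right ENNReal.ofReal_ne_top).mp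
    (jensen φ hφconc hpos hgeo μ)

include hφnn hφ0 hφ1 hφconc hpos hgeo in
lemma Gstep (μ : ℕ) :
    G φ μ + ENNReal.ofReal (W φ μ) * G φ 1 ≤ G φ ((μ:ℝ) + 1) := by
  have hμnn : (0:ℝ) ≤ (μ:ℝ) := Nat.cast_nonneg μ
  have hWnn : ∀ a, 0 ≤ W φ a := fun a => le_of_lt (hpos a)
  calc G φ μ + ENNReal.ofReal (W φ μ) * G φ 1
      ≤ G φ μ + (∑' a, pp (μ:ℝ) a * ENNReal.ofReal (W φ a)) * G φ 1 :=
        add_le_add_right (mul_le_mul_left (jensen' φ hφconc hpos hgeo μ) _) _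
    _ = (∑' a, pp (μ:ℝ) a * ENNReal.ofReal (φ a)) +
          ∑' a, pp (μ:ℝ) a * ENNReal.ofReal (W φ a) * G φ 1 := by
        rw [G, ENNReal.tsum_mul_right]
    _ = ∑' a, (pp (μ:ℝ) a * ENNReal.ofReal (φ a) +
          pp (μ:ℝ) a * ENNReal.ofReal (W φ a) * G φ 1) := by
        rw [ENNReal.tsum_add]
    _ = ∑' (a : ℕ) (b : ℕ), pp (μ:ℝ) a * pp 1 b *
          (ENNReal.ofReal (φ a) + ENNReal.ofReal (W φ a) * ENNReal.ofReal (φ b)) := by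
        refine tsum_congr fun a => ?_
        rw [tsum_congr (fun b : ℕ => by
          rw [mul_add] : ∀ b : ℕ, pp (μ:ℝ) a * pp 1 b *
            (ENNReal.ofReal (φ a) + ENNReal.ofReal (W φ a) * ENNReal.ofReal (φ b)) =
            pp (μ:ℝ) a * pp 1 b * ENNReal.ofReal (φ a) +
              pp (μ:ℝ) a * pp 1 b * (ENNReal.ofReal (W φ a) * ENNReal.ofReal (φ b)))]
        rw [ENNReal.tsum_add]
        congr 1
        · calc pp (μ:ℝ) a * ENNReal.ofReal (φ a)
              = pp (μ:ℝ) a * ENNReal.ofReal (φ a) * ∑' b, pp (1:ℝ) b := by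
                rw [pp_tsum (1:ℝ) zero_le_one, mul_one]
            _ = ∑' b, pp (μ:ℝ) a * pp 1 b * ENNReal.ofReal (φ a) := by
                rw [← ENNReal.tsum_mul_left]
                refine tsum_congr fun b => ?_
                ring
        · calc pp (μ:ℝ) a * ENNReal.ofReal (W φ a) * G φ 1
              = ∑' b, pp (μ:ℝ) a * ENNReal.ofReal (W φ a) *
                  (pp (1:ℝ) b * ENNReal.ofReal (φ b)) := by
                rw [G, ← ENNReal.tsum_mul_left]
            _ = ∑' b, pp (μ:ℝ) a * pp 1 b *
                  (ENNReal.ofReal (W φ a) * ENNReal.ofReal (φ b)) := by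
                refine tsum_congr fun b => ?_
                ring
    _ = ∑' x : ℕ × ℕ, pp (μ:ℝ) x.1 * pp 1 x.2 *
          (ENNReal.ofReal (φ x.1) + ENNReal.ofReal (W φ x.1) * ENNReal.ofReal (φ x.2)) :=
        (ENNReal.tsum_prod' (f := fun x : ℕ × ℕ => pp (μ:ℝ) x.1 * pp 1 x.2 *
          (ENNReal.ofReal (φ x.1) + ENNReal.ofReal (W φ x.1) * ENNReal.ofReal (φ x.2)))).symm
    _ ≤ ∑' x : ℕ × ℕ, pp (μ:ℝ) x.1 * pp 1 x.2 * ENNReal.ofReal (φ (x.1 + x.2)) := by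
        refine ENNReal.tsum_le_tsum fun x => ?_
        refine mul_le_mul_right ?_ _
        rw [← ENNReal.ofReal_mul (hWnn x.1),
          ← ENNReal.ofReal_add (hφnn x.1) (mul_nonneg (hWnn x.1) (hφnn x.2))]
        exact ENNReal.ofReal_le_ofReal (superadd φ hφ0 hφ1 hpos hgeo x.2 x.1)
    _ = G φ ((μ:ℝ) + 1) := by
        rw [G, conv_tsum (μ:ℝ) 1 hμnn zero_le_one]

include hφconc hpos hφ0 hφ1 in
lemma G_le (l : ℝ) (hl : 0 ≤ l) : G φ l ≤ ENNReal.ofReal l := by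
  calc G φ l ≤ ∑' j, pp l j * ENNReal.ofReal (j : ℝ) := by
        refine ENNReal.tsum_le_tsum fun j => mul_le_mul_right ?_ _
        exact ENNReal.ofReal_le_ofReal (phi_le φ hφconc hpos hφ0 hφ1 j)
    _ = ENNReal.ofReal l := pp_mean l hl

include hφnn hφ0 hφ1 hφconc hpos hgeo in
lemma G_ge (k : ℕ) : ENNReal.ofReal (φ k) * G φ 1 ≤ G φ (k : ℝ) := by
  induction k with
  | zero => simp [hφ0]
  | succ k ih =>
    have h1 : φ (k+1) = φ k + W φ k := by simp [W]
    have hcast : ((k+1 : ℕ) : ℝ) = (k : ℝ) + 1 := by push_cast; ring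
    rw [h1, hcast, ENNReal.ofReal_add (hφnn k) (le_of_lt (hpos k) : (0:ℝ) ≤ W φ k), add_mul]
    exact le_trans (add_le_add_left ih _)
      (Gstep φ hφnn hφ0 hφ1 hφconc hpos hgeo k)

include hφnn in
lemma G_toReal (l : ℝ) (hl : 0 ≤ l) :
    (G φ l).toReal = ∑' j, Real.exp (-l) * l ^ j / (Nat.factorial j) * φ j := by
  have h1 : ∀ j : ℕ, pp l j * ENNReal.ofReal (φ j) =
      ENNReal.ofReal (Real.exp (-l) * l ^ j / (Nat.factorial j) * φ j) := by
    intro j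
    rw [pp, ← ENNReal.ofReal_mul (pp_real_nonneg l hl j)]
  rw [G]
  simp only [h1]
  rw [ENNReal.tsum_toReal_eq (fun j => ENNReal.ofReal_ne_top)]
  refine tsum_congr fun j => ?_
  rw [ENNReal.toReal_ofReal (mul_nonneg (pp_real_nonneg l hl j) (hφnn j))]

end
end Stmt14Aux

theorem stmt14 (φ : ℕ → ℝ) (hφnn : ∀ k, 0 ≤ φ k) (hφ0 : φ 0 = 0) (hφ1 : φ 1 = 1)
    (hφmono : Monotone φ)
    (hφconc : ∀ k, φ (k + 2) - φ (k + 1) ≤ φ (k + 1) - φ k)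
    (hpos : ∀ i : ℕ, 0 < φ (i + 1) - φ i)
    (hgeo : ∀ i : ℕ, (φ (i + 2) - φ (i + 1)) ^ 2 ≤
      (φ (i + 1) - φ i) * (φ (i + 3) - φ (i + 2))) :
    ∀ k : ℕ, 1 ≤ k →
      (∑' j : ℕ, Real.exp (-(1 : ℝ)) * (1 : ℝ) ^ j / (Nat.factorial j) * φ j) / φ 1 ≤
        (∑' j : ℕ, Real.exp (-(k : ℝ)) * (k : ℝ) ^ j / (Nat.factorial j) * φ j) / φ k := by
  intro k hk
  open Stmt14Aux in
  have hφkpos : 0 < φ k := lt_of_lt_of_le (by rw [hφ1]; norm_num : (0:ℝ) < φ 1) (hφmono hk)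
  have hknn : (0:ℝ) ≤ (k:ℝ) := Nat.cast_nonneg k
  have hGk_ne : Stmt14Aux.G φ (k:ℝ) ≠ ⊤ :=
    ne_top_of_le_ne_top ENNReal.ofReal_ne_top (Stmt14Aux.G_le φ hφ0 hφ1 hφconc hpos (k:ℝ) hknn)
  have key := Stmt14Aux.G_ge φ hφnn hφ0 hφ1 hφconc hpos hgeo k
  have key2 := ENNReal.toReal_mono hGk_ne key
  rw [ENNReal.toReal_mul, ENNReal.toReal_ofReal (hφnn k),
    Stmt14Aux.G_toReal φ hφnn (k:ℝ) hknn,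
    Stmt14Aux.G_toReal φ hφnn (1:ℝ) zero_le_one] at key2
  rw [hφ1, div_one, le_div_iff₀ hφkpos]
  calc (∑' j : ℕ, Real.exp (-(1:ℝ)) * (1:ℝ) ^ j / (Nat.factorial j) * φ j) * φ k
      = φ k * ∑' j : ℕ, Real.exp (-(1:ℝ)) * (1:ℝ) ^ j / (Nat.factorial j) * φ j := by ring
    _ ≤ _ := key2
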